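/- For every integer p ≥ 1, setting a = 2^p, one has β_b(C(2a;1,a)) = α(C(2a;1,a)) = a − 1. -/

import Mathlib

/-- The eccentricity of a vertex: maximum distance to any other vertex. -/
noncomputable def eccent {V : Type*} [Fintype V] (G : SimpleGraph V) (v : V) : ℕ :=
  Finset.univ.sup (fun u => G.dist v u)

/-- The diameter of a finite graph: maximum eccentricity. -/
noncomputable def graphDiam {V : Type*} [Fintype V] (G : SimpleGraph V) : ℕ :=
  Finset.univ.sup (fun v => eccent G v)

/-- `f` is an independent broadcast on `G`. -/
def IsIndepBroadcast {V : Type*} [Fintype V] (G : SimpleGraph V) (f : V → ℕ) : Prop :=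
  (∀ v, f v ≤ eccent G v) ∧
  ∀ u v : V, u ≠ v → 0 < f u → 0 < f v → max (f u) (f v) < G.dist u v

/-- The broadcast independence number: maximum cost of an independent broadcast. -/
noncomputable def betaB {V : Type*} [Fintype V] (G : SimpleGraph V) : ℕ :=
  sSup {k | ∃ f : V → ℕ, IsIndepBroadcast G f ∧ ∑ v, f v = k}

/-- The independence number: maximum size of an independent set. -/
noncomputable def alphaNum {V : Type*} [Fintype V] (G : SimpleGraph V) : ℕ :=
  sSup {k | ∃ s : Finset V, (∀ u ∈ s, ∀ v ∈ s, ¬ G.Adj u v) ∧ s.card = k}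

/-- The circulant graph `C(n;1,a)` on vertices `v_0,…,v_{n-1}` with edges
`v_i v_{i+1}` and `v_i v_{i+a}`, indices mod `n`. -/
def circulantGraph (n a : ℕ) : SimpleGraph (Fin n) :=
  SimpleGraph.fromRel (fun i j => (i.val + 1) % n = j.val ∨ (i.val + a) % n = j.val)

section Helpers
open Finset
open Fin.NatCast

variable {n a : ℕ}

lemma circ_adj {u v : Fin n} :
    (circulantGraph n a).Adj u v ↔ u ≠ v ∧
      ((u.val + 1) % n = v.val ∨ (u.val + a) % n = v.val ∨
       (v.val + 1) % n = u.val ∨ (v.val + a) % n = u.val) := by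
  unfold circulantGraph
  rw [SimpleGraph.fromRel_adj]
  tauto

variable [NeZero n]

lemma val_add_nat (u : Fin n) (c : ℕ) : (u + (c : Fin n)).val = (u.val + c) % n := by
  rw [Fin.val_add, Fin.val_natCast, Nat.add_mod_mod]

lemma adj_succ (hn : 2 ≤ n) (u : Fin n) : (circulantGraph n a).Adj u (u + 1) := by
  have h1 : (u + 1).val = (u.val + 1) % n := by
    have := val_add_nat u 1
    simpa using this
  rw [circ_adj]
  refine ⟨fun h => ?_, Or.inl h1.symm⟩
  have hv := congrArg Fin.val h
  rw [h1] at hv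
  have := u.isLt
  rcases Nat.lt_or_ge (u.val + 1) n with h2 | h2
  · rw [Nat.mod_eq_of_lt h2] at hv; omega
  · have : (u.val + 1) % n = 0 := by
      have : u.val + 1 = n := by omega
      simp [this]
    omega

lemma adj_chord (hn : n = 2 * a) (ha : 2 ≤ a) (u : Fin n) :
    (circulantGraph n a).Adj u (u + (a : Fin n)) := by
  have h1 : (u + (a : Fin n)).val = (u.val + a) % n := val_add_nat u a
  rw [circ_adj]
  refine ⟨fun h => ?_, Or.inr (Or.inl h1.symm)⟩
  have hv := congrArg Fin.val h
  rw [h1] at hv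
  have := u.isLt
  rcases Nat.lt_or_ge (u.val + a) n with h2 | h2
  · rw [Nat.mod_eq_of_lt h2] at hv; omega
  · have h3 : (u.val + a) % n = u.val + a - n := by
      rw [Nat.mod_eq_sub_mod h2, Nat.mod_eq_of_lt (by omega)]
    omega

lemma reach_add (hn : 2 ≤ n) (u : Fin n) (c : ℕ) :
    (circulantGraph n a).Reachable u (u + (c : Fin n)) := by
  induction c with
  | zero => rw [Nat.cast_zero, add_zero]
  | succ c ih =>
      have : ((c + 1 : ℕ) : Fin n) = (c : Fin n) + 1 := by push_cast; ring
      rw [this, ← add_assoc]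
      exact ih.trans (adj_succ hn (u + (c : Fin n))).reachable

lemma circ_connected (hn : 2 ≤ n) : (circulantGraph n a).Connected := by
  rw [SimpleGraph.connected_iff]
  refine ⟨fun u v => ?_, ⟨0⟩⟩
  have := reach_add (a := a) hn u (v - u).val
  rwa [Fin.cast_val_eq_self, add_comm, sub_add_cancel] at this

lemma dist_add_le (hn : 2 ≤ n) (u : Fin n) (c : ℕ) :
    (circulantGraph n a).dist u (u + (c : Fin n)) ≤ c := by
  induction c with
  | zero => simp
  | succ c ih =>
      have hc : ((c + 1 : ℕ) : Fin n) = (c : Fin n) + 1 := by push_cast; ring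
      rw [hc, ← add_assoc]
      calc (circulantGraph n a).dist u (u + (c : Fin n) + 1)
          ≤ (circulantGraph n a).dist u (u + (c : Fin n)) +
            (circulantGraph n a).dist (u + (c : Fin n)) (u + (c : Fin n) + 1) :=
            (circ_connected hn).dist_triangle
        _ ≤ c + 1 := by
            have := (SimpleGraph.dist_eq_one_iff_adj).mpr (adj_succ (a := a) hn (u + (c : Fin n)))
            omega

lemma dist_le_val (hn : 2 ≤ n) (u v : Fin n) :
    (circulantGraph n a).dist u v ≤ (v - u).val := by
  have := dist_add_le (a := a) hn u (v - u).val
  rwa [Fin.cast_val_eq_self, add_comm, sub_add_cancel] at this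

lemma val_ne_zero_of_ne {x : Fin n} (h : x ≠ 0) : x.val ≠ 0 :=
  fun h0 => h (Fin.ext (by simp [h0]))

lemma sub_val_ne_zero {u v : Fin n} (huv : u ≠ v) : (v - u).val ≠ 0 :=
  val_ne_zero_of_ne (sub_ne_zero.mpr (Ne.symm huv))

lemma val_sub_add (u v : Fin n) (huv : u ≠ v) : (u - v).val + (v - u).val = n := by
  have h0 : (u - v) + (v - u) = 0 := by abel
  have hv := congrArg Fin.val h0
  rw [Fin.val_add, Fin.val_zero] at hv
  have h1 : u - v ≠ 0 := sub_ne_zero.mpr huv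
  have h2 : v - u ≠ 0 := sub_ne_zero.mpr (Ne.symm huv)
  replace h1 := val_ne_zero_of_ne h1
  replace h2 := val_ne_zero_of_ne h2
  have l1 := (u - v).isLt
  have l2 := (v - u).isLt
  rcases Nat.lt_or_ge ((u - v).val + (v - u).val) n with h | h
  · rw [Nat.mod_eq_of_lt h] at hv; omega
  · rw [Nat.mod_eq_sub_mod h, Nat.mod_eq_of_lt (by omega)] at hv; omega

lemma dist_le_mod (hn : n = 2 * a) (ha : 2 ≤ a) (u v : Fin n) :
    (circulantGraph n a).dist u v ≤ (v - u).val % a + 1 := by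
  have hn2 : 2 ≤ n := by omega
  set d := (v - u).val with hd
  have hdn : d < n := (v - u).isLt
  have hveq : v = u + (d : Fin n) := by
    rw [hd, Fin.cast_val_eq_self, add_comm, sub_add_cancel]
  rcases Nat.lt_or_ge d a with h | h
  · rw [Nat.mod_eq_of_lt h]
    calc (circulantGraph n a).dist u v ≤ d := by rw [hveq]; exact dist_add_le hn2 u d
      _ ≤ d + 1 := by omega
  · have he : d % a = d - a := by
      rw [Nat.mod_eq_sub_mod h, Nat.mod_eq_of_lt (by omega)]
    set e := d - a with hee
    have hsplit : ((d : ℕ) : Fin n) = (e : Fin n) + (a : Fin n) := by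
      have : d = e + a := by omega
      rw [this]; push_cast; ring
    rw [hveq, hsplit, ← add_assoc]
    calc (circulantGraph n a).dist u (u + (e : Fin n) + (a : Fin n))
        ≤ (circulantGraph n a).dist u (u + (e : Fin n)) +
          (circulantGraph n a).dist (u + (e : Fin n)) (u + (e : Fin n) + (a : Fin n)) :=
          (circ_connected hn2).dist_triangle
      _ ≤ e + 1 := by
          have h1 := dist_add_le (a := a) hn2 u e
          have h2 := (SimpleGraph.dist_eq_one_iff_adj).mpr (adj_chord hn ha (u + (e : Fin n)))
          omega
      _ = d % a + 1 := by omega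

lemma dist_le_delta (hn : n = 2 * a) (ha : 2 ≤ a) (u v : Fin n) (huv : u ≠ v) :
    (circulantGraph n a).dist u v ≤ min ((v - u).val % a) (a - (v - u).val % a) + 1 := by
  set d := (v - u).val with hd
  set e := d % a with he
  rcases le_or_gt e (a - e) with h | h
  · rw [min_eq_left h]
    exact dist_le_mod hn ha u v
  · rw [min_eq_right (le_of_lt h)]
    have hsum := val_sub_add u v huv
    have hdn : d < n := (v - u).isLt
    have hd0 : d ≠ 0 := sub_val_ne_zero huv
    have hepos : 0 < e := by
      by_contra h0
      have : e = 0 := by omega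
      rw [this] at h; omega
    have hkey : (u - v).val % a = a - e := by
      have huvval : (u - v).val = n - d := by omega
      rcases Nat.lt_or_ge d a with hda | hda
      · have : e = d := by rw [he, Nat.mod_eq_of_lt hda]
        have h2 : n - d = a + (a - e) := by omega
        rw [huvval, h2, Nat.add_mod_left, Nat.mod_eq_of_lt (by omega)]
      · have h4 : d % a = d - a := by
          rw [Nat.mod_eq_sub_mod hda, Nat.mod_eq_of_lt (by omega)]
        have : d = a + e := by omega
        have h2 : n - d = a - e := by omega
        rw [huvval, h2, Nat.mod_eq_of_lt (by omega)]
    have := dist_le_mod hn ha v u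
    rw [SimpleGraph.dist_comm, ← hkey]
    exact this

lemma dist_le_all (hn : n = 2 * a) (ha : 2 ≤ a) (u v : Fin n) :
    (circulantGraph n a).dist u v ≤ a - 1 := by
  rcases eq_or_ne u v with rfl | huv
  · rw [SimpleGraph.dist_self]; omega
  have hn2 : 2 ≤ n := by omega
  have hdn : (v - u).val < n := (v - u).isLt
  have hd0 : (v - u).val ≠ 0 := sub_val_ne_zero huv
  rcases Nat.lt_or_ge (v - u).val a with h | h
  · have := dist_le_val (a := a) hn2 u v
    omega
  · rcases Nat.eq_or_lt_of_le h with h1 | h1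
    · have h2 := dist_le_mod hn ha u v
      have hmod : (v - u).val % a = 0 := by rw [← h1, Nat.mod_self]
      omega
    · have hsum := val_sub_add u v huv
      have hle := dist_le_val (a := a) hn2 v u
      have hcomm : (circulantGraph n a).dist u v = (circulantGraph n a).dist v u :=
        SimpleGraph.dist_comm
      omega


lemma ecc_le (hn : n = 2 * a) (ha : 2 ≤ a) (u : Fin n) :
    eccent (circulantGraph n a) u ≤ a - 1 :=
  Finset.sup_le fun v _ => dist_le_all hn ha u v

lemma one_le_ecc (hn2 : 2 ≤ n) (u : Fin n) : 1 ≤ eccent (circulantGraph n a) u := by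
  have h := (SimpleGraph.dist_eq_one_iff_adj).mpr (adj_succ (a := a) hn2 u)
  calc (1 : ℕ) = (circulantGraph n a).dist u (u + 1) := h.symm
    _ ≤ eccent (circulantGraph n a) u := Finset.le_sup (Finset.mem_univ _)

/-- projection bridge : casting `(v-u).val` to `ZMod a` gives the difference of values. -/
lemma proj_sub (hn : n = 2 * a) (ha : 2 ≤ a) (u v : Fin n) :
    (((v - u).val : ℕ) : ZMod a) = (v.val : ZMod a) - (u.val : ZMod a) := by
  haveI : NeZero a := ⟨by omega⟩
  have hveq : v = u + (((v - u).val : ℕ) : Fin n) := by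
    rw [Fin.cast_val_eq_self, add_comm, sub_add_cancel]
  have hv := congrArg Fin.val hveq
  rw [val_add_nat] at hv
  have hmodeq : (u.val + (v - u).val) % n ≡ u.val + (v - u).val [MOD a] :=
    (Nat.mod_modEq _ n).of_dvd ⟨2, by omega⟩
  have hcast : (v.val : ZMod a) = ((u.val + (v - u).val : ℕ) : ZMod a) := by
    rw [hv]
    exact (ZMod.natCast_eq_natCast_iff _ _ _).mpr hmodeq
  push_cast at hcast
  rw [hcast]; ring


lemma key_pair (hn : n = 2 * a) (ha : 2 ≤ a) {f : Fin n → ℕ}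
    (hf : IsIndepBroadcast (circulantGraph n a) f) {u v : Fin n}
    (huv : u ≠ v) (hu : 0 < f u) (hv : 0 < f v) :
    max (f u) (f v) ≤ min ((v - u).val % a) (a - (v - u).val % a) := by
  have h1 := hf.2 u v huv hu hv
  have h2 := dist_le_delta hn ha u v huv
  omega

end Helpers

section MainUB
open Finset
open Fin.NatCast

lemma main_ub {n a : ℕ} [NeZero n] (p : ℕ) (hp : 1 ≤ p) (hn : n = 2 * a)
    (hadef : a = 2 ^ p) (f : Fin n → ℕ)
    (hf : IsIndepBroadcast (circulantGraph n a) f) :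
    ∑ v, f v ≤ a - 1 := by
  classical
  haveI hanz : NeZero a := ⟨by simp [hadef]⟩
  have ha : 2 ≤ a := by
    have h2 : 2 ^ 1 ≤ 2 ^ p := Nat.pow_le_pow_right (by norm_num) hp
    rw [hadef]
    simpa using h2
  set S : Finset (Fin n) := Finset.univ.filter (fun v => 0 < f v) with hS
  have hfS : ∀ u ∈ S, 0 < f u := fun u hu => (Finset.mem_filter.mp hu).2
  have hfle : ∀ u, f u ≤ a - 1 := fun u => le_trans (hf.1 u) (ecc_le hn ha u)
  have hsum_eq : ∑ v, f v = ∑ v ∈ S, f v := by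
    rw [hS]
    exact (Finset.sum_filter_of_ne (fun x _ hx => Nat.pos_of_ne_zero hx)).symm
  -- arcs in ZMod a
  set arc : Fin n → Finset (ZMod a) :=
    fun u => (Finset.range (f u)).image (fun t : ℕ => (u.val : ZMod a) + (t : ZMod a)) with harc
  have card_arc : ∀ u, (arc u).card = f u := by
    intro u
    rw [harc]
    rw [Finset.card_image_of_injOn, Finset.card_range]
    intro s hs t ht hst
    simp only [Finset.coe_range, Set.mem_Iio] at hs ht
    have h1 : (s : ZMod a) = (t : ZMod a) := by
      have := add_left_cancel hst
      exact this
    have := congrArg ZMod.val h1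
    rwa [ZMod.val_cast_of_lt (by have := hfle u; omega),
      ZMod.val_cast_of_lt (by have := hfle u; omega)] at this
  -- the bridge for mod values
  have hbridge : ∀ u v : Fin n, (((v - u).val % a : ℕ) : ZMod a)
      = (v.val : ZMod a) - (u.val : ZMod a) := by
    intro u v
    rw [ZMod.natCast_mod, proj_sub hn ha]
  have hdisj : ∀ u ∈ S, ∀ v ∈ S, u ≠ v → Disjoint (arc u) (arc v) := by
    intro u hu v hv huv
    rw [Finset.disjoint_left]
    rintro z hzu hzv
    rw [harc, Finset.mem_image] at hzu hzv
    obtain ⟨t, ht, rfl⟩ := hzu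
    obtain ⟨s, hs, heq⟩ := hzv
    rw [Finset.mem_range] at ht hs
    have key1 := key_pair hn ha hf huv (hfS u hu) (hfS v hv)
    have key2 := key_pair hn ha hf (Ne.symm huv) (hfS v hv) (hfS u hu)
    have hmlt1 : (v - u).val % a < a := Nat.mod_lt _ (by omega)
    have hmlt2 : (u - v).val % a < a := Nat.mod_lt _ (by omega)
    rcases le_or_gt s t with hst | hst
    · -- v.val - u.val = t - s
      have h2 : (((v - u).val % a : ℕ) : ZMod a) = ((t - s : ℕ) : ZMod a) := by
        rw [hbridge]
        push_cast [Nat.cast_sub hst]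
        have : (v.val : ZMod a) = (u.val : ZMod a) + t - s := by
          rw [← heq]; ring
        rw [this]; ring
      have := congrArg ZMod.val h2
      rw [ZMod.val_cast_of_lt hmlt1,
        ZMod.val_cast_of_lt (show t - s < a by have := hfle u; omega)] at this
      have hfu := hfle u
      omega
    · have h2 : (((u - v).val % a : ℕ) : ZMod a) = ((s - t : ℕ) : ZMod a) := by
        rw [hbridge]
        push_cast [Nat.cast_sub (le_of_lt hst)]
        have : (u.val : ZMod a) = (v.val : ZMod a) + s - t := by
          rw [heq]; ring
        rw [this]; ring
      have := congrArg ZMod.val h2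
      rw [ZMod.val_cast_of_lt hmlt2,
        ZMod.val_cast_of_lt (show s - t < a by have := hfle v; omega)] at this
      have hfv := hfle v
      omega
  have hsum_le : ∑ v ∈ S, f v ≤ a := by
    calc ∑ v ∈ S, f v = ∑ u ∈ S, (arc u).card :=
          Finset.sum_congr rfl (fun u _ => (card_arc u).symm)
      _ = (S.biUnion arc).card := (Finset.card_biUnion hdisj).symm
      _ ≤ Fintype.card (ZMod a) := Finset.card_le_univ _
      _ = a := ZMod.card a
  -- suppose for contradiction that the total is a
  by_contra hcon
  push_neg at hcon
  have hTa : ∑ v ∈ S, f v = a := by omega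
  exfalso
  have huniv : S.biUnion arc = Finset.univ := by
    apply Finset.eq_univ_of_card
    have hsums : ∑ u ∈ S, (arc u).card = ∑ u ∈ S, f u :=
      Finset.sum_congr rfl (fun u _ => card_arc u)
    rw [Finset.card_biUnion hdisj, hsums, hTa, ZMod.card a]
  -- successor function
  have hstep : ∀ u ∈ S, ∃ v, v ∈ S ∧ f v ≤ f u ∧ v = u + ((f u + a : ℕ) : Fin n) := by
    intro u hu
    have hz : ((u.val : ZMod a) + ((f u : ℕ) : ZMod a)) ∈ S.biUnion arc := by
      rw [huniv]; exact Finset.mem_univ _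
    rw [Finset.mem_biUnion] at hz
    obtain ⟨v, hv, hzv⟩ := hz
    rw [harc, Finset.mem_image] at hzv
    obtain ⟨s, hs, heq⟩ := hzv
    rw [Finset.mem_range] at hs
    have huv : u ≠ v := by
      rintro rfl
      have h1 : ((f u : ℕ) : ZMod a) = (s : ZMod a) := (add_left_cancel heq).symm
      have := congrArg ZMod.val h1
      rw [ZMod.val_cast_of_lt (show f u < a by have := hfle u; omega),
        ZMod.val_cast_of_lt (show s < a by have := hfle u; omega)] at this
      omega
    have hs0 : s = 0 := by
      by_contra hs0
      have hfu1 := hfS u hu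
      have hfv1 := hfS v hv
      apply Finset.disjoint_left.mp (hdisj u hu v hv huv)
        (show ((u.val : ZMod a) + ((f u - 1 : ℕ) : ZMod a)) ∈ arc u by
          rw [harc, Finset.mem_image]
          exact ⟨f u - 1, Finset.mem_range.mpr (by omega), rfl⟩)
      rw [harc, Finset.mem_image]
      refine ⟨s - 1, Finset.mem_range.mpr (by omega), ?_⟩
      push_cast [Nat.cast_sub (show 1 ≤ s by omega), Nat.cast_sub (show 1 ≤ f u by omega)]
      linear_combination heq
    rw [hs0] at heq
    push_cast at heq
    rw [add_zero] at heq
    -- heq : (v.val : ZMod a) = (u.val : ZMod a) + f u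
    have hmod : (v - u).val % a = f u := by
      have h2 := hbridge u v
      rw [heq] at h2
      have h3 : (((v - u).val % a : ℕ) : ZMod a) = ((f u : ℕ) : ZMod a) := by
        rw [h2]; ring
      have := congrArg ZMod.val h3
      rwa [ZMod.val_cast_of_lt (Nat.mod_lt _ (by omega)),
        ZMod.val_cast_of_lt (show f u < a by have := hfle u; omega)] at this
    have hflev : f v ≤ f u := by
      have key1 := key_pair hn ha hf huv (hfS u hu) (hfS v hv)
      rw [hmod] at key1
      omega
    have hd : (v - u).val = f u + a := by
      have hdn : (v - u).val < n := (v - u).isLt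
      have hd0 : (v - u).val ≠ 0 := sub_val_ne_zero huv
      have : (v - u).val = f u ∨ (v - u).val = f u + a := by
        rcases Nat.lt_or_ge (v - u).val a with hlt | hge
        · left; rw [← hmod, Nat.mod_eq_of_lt hlt]
        · right
          have h9 : (v - u).val % a = (v - u).val - a := by
            rw [Nat.mod_eq_sub_mod hge, Nat.mod_eq_of_lt (by omega)]
          omega
      rcases this with h | h
      · exfalso
        have hdist := hf.2 u v huv (hfS u hu) (hfS v hv)
        have := dist_le_val (a := a) (by omega) u v
        omega
      · exact h
    refine ⟨v, hv, hflev, ?_⟩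
    have : v = u + (((v - u).val : ℕ) : Fin n) := by
      rw [Fin.cast_val_eq_self, add_comm, sub_add_cancel]
    rw [this, hd]
  -- totalize
  have hstep' : ∀ u : Fin n, ∃ v : Fin n,
      (u ∈ S → (v ∈ S ∧ f v ≤ f u ∧ v = u + ((f u + a : ℕ) : Fin n))) ∧ (u ∉ S → v = u) := by
    intro u
    by_cases hu : u ∈ S
    · obtain ⟨v, hv1, hv2, hv3⟩ := hstep u hu
      exact ⟨v, fun _ => ⟨hv1, hv2, hv3⟩, fun h => absurd hu h⟩
    · exact ⟨u, fun h => absurd h hu, fun _ => rfl⟩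
  choose σ hσ using hstep'
  have hσS : ∀ u ∈ S, σ u ∈ S := fun u hu => ((hσ u).1 hu).1
  have hσle : ∀ u ∈ S, f (σ u) ≤ f u := fun u hu => ((hσ u).1 hu).2.1
  have hσpos : ∀ u ∈ S, σ u = u + ((f u + a : ℕ) : Fin n) := fun u hu => ((hσ u).1 hu).2.2
  -- projection of σ u
  have hσproj : ∀ u ∈ S, ((σ u).val : ZMod a) = (u.val : ZMod a) + (f u : ZMod a) := by
    intro u hu
    have h1 : σ u - u = ((f u + a : ℕ) : Fin n) := by rw [hσpos u hu]; abel
    have h2 := proj_sub hn ha u (σ u)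
    rw [h1] at h2
    rw [Fin.val_natCast] at h2
    have h3 : (f u + a) % n = f u + a := Nat.mod_eq_of_lt (by have := hfle u; omega)
    rw [h3] at h2
    push_cast at h2
    rw [ZMod.natCast_self] at h2
    -- h2 : (f u : ZMod a) + 0 = (σ u).val - u.val  (roughly)
    have := h2
    linear_combination -this
  -- injectivity on S
  have hinjS : ∀ u ∈ S, ∀ w ∈ S, σ u = σ w → u = w := by
    intro u hu w hw huw
    by_contra hne
    have h1 : ((u.val : ZMod a) + ((f u - 1 : ℕ) : ZMod a)) ∈ arc u := by
      rw [harc, Finset.mem_image]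
      exact ⟨f u - 1, Finset.mem_range.mpr (by have := hfS u hu; omega), rfl⟩
    have h2 : ((u.val : ZMod a) + ((f u - 1 : ℕ) : ZMod a)) ∈ arc w := by
      rw [harc, Finset.mem_image]
      refine ⟨f w - 1, Finset.mem_range.mpr (by have := hfS w hw; omega), ?_⟩
      have e1 := hσproj u hu
      have e2 := hσproj w hw
      rw [huw] at e1
      push_cast [Nat.cast_sub (show 1 ≤ f u from hfS u hu),
        Nat.cast_sub (show 1 ≤ f w from hfS w hw)]
      linear_combination e1 - e2
    exact Finset.disjoint_left.mp (hdisj u hu w hw hne) h1 h2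
  -- f is σ-invariant on S
  have himg : S.image σ = S := by
    apply Finset.eq_of_subset_of_card_le
    · intro v hv
      rw [Finset.mem_image] at hv
      obtain ⟨u, hu, rfl⟩ := hv
      exact hσS u hu
    · rw [Finset.card_image_of_injOn
        (fun u hu w hw h => hinjS u (Finset.mem_coe.mp hu) w (Finset.mem_coe.mp hw) h)]
  have hff : ∀ u ∈ S, f (σ u) = f u := by
    by_contra hcon2
    push_neg at hcon2
    obtain ⟨u1, hu1, hne1⟩ := hcon2
    have hlt : ∑ u ∈ S, f (σ u) < ∑ u ∈ S, f u :=
      Finset.sum_lt_sum (fun u hu => hσle u hu) ⟨u1, hu1, by have := hσle u1 hu1; omega⟩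
    have heqs : ∑ u ∈ S, f (σ u) = ∑ u ∈ S, f u := by
      rw [← Finset.sum_image (fun u hu w hw h => hinjS u hu w hw h), himg]
    omega
  -- pick a starting point
  have hSne : S.Nonempty := by
    by_contra hemp
    rw [Finset.not_nonempty_iff_eq_empty] at hemp
    rw [hemp, Finset.sum_empty] at hTa
    omega
  obtain ⟨u₀, hu₀⟩ := hSne
  set γ := f u₀ with hγ
  have hγpos : 0 < γ := hfS u₀ hu₀
  have hγle : γ ≤ a - 1 := hfle u₀
  -- orbit facts
  have hiter : ∀ j : ℕ, σ^[j] u₀ ∈ S ∧ f (σ^[j] u₀) = γ ∧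
      σ^[j] u₀ = u₀ + ((j * (γ + a) : ℕ) : Fin n) := by
    intro j
    induction j with
    | zero =>
        refine ⟨by simpa using hu₀, by simpa using hγ.symm, by simp⟩
    | succ j ih =>
        obtain ⟨ih1, ih2, ih3⟩ := ih
        rw [Function.iterate_succ_apply']
        refine ⟨hσS _ ih1, by rw [hff _ ih1, ih2], ?_⟩
        rw [hσpos _ ih1, ih2, ih3]
        have : ((j + 1) * (γ + a) : ℕ) = (j * (γ + a) : ℕ) + (γ + a) := by ring
        rw [this]
        push_cast
        abel
  -- periodicity
  have hcancel : ∀ i j : ℕ, σ^[i] u₀ = σ^[j] u₀ → σ^[j - i] u₀ = u₀ := by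
    intro i
    induction i with
    | zero => intro j h; rw [Nat.sub_zero, ← h, Function.iterate_zero_apply]
    | succ i ih =>
        intro j h
        rcases Nat.eq_zero_or_pos j with rfl | hj
        · rw [Nat.zero_sub, Function.iterate_zero_apply]
        obtain ⟨j', rfl⟩ : ∃ j', j = j' + 1 := ⟨j - 1, by omega⟩
        rw [Function.iterate_succ_apply', Function.iterate_succ_apply'] at h
        have h2 := hinjS _ (hiter i).1 _ (hiter j').1 h
        have := ih j' h2
        simpa using this
  obtain ⟨i, j, hij, hijeq⟩ := Finite.exists_ne_map_eq_of_infinite (fun k : ℕ => σ^[k] u₀)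
  have hper : ∃ m : ℕ, 0 < m ∧ Function.IsPeriodicPt σ m u₀ := by
    rcases lt_or_gt_of_ne hij with h | h
    · exact ⟨j - i, by omega, hcancel i j hijeq⟩
    · exact ⟨i - j, by omega, hcancel j i hijeq.symm⟩
  obtain ⟨m, hm0, hmper⟩ := hper
  set r := Function.minimalPeriod σ u₀ with hr
  have hr0 : 0 < r := hmper.minimalPeriod_pos hm0
  have hrper : σ^[r] u₀ = u₀ := Function.iterate_minimalPeriod
  -- r * γ ≤ a
  set Orb := (Finset.range r).image (fun k => σ^[k] u₀) with hOrb
  have hOrbS : Orb ⊆ S := by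
    intro v hv
    rw [hOrb, Finset.mem_image] at hv
    obtain ⟨k, _, rfl⟩ := hv
    exact (hiter k).1
  have hinjOrb : Set.InjOn (fun k => σ^[k] u₀) (Finset.range r : Set ℕ) := by
    rw [Finset.coe_range]
    exact Function.iterate_injOn_Iio_minimalPeriod
  have hcardOrb : ∑ v ∈ Orb, f v = r * γ := by
    rw [hOrb, Finset.sum_image
      (fun x hx y hy h => hinjOrb (Finset.mem_coe.mpr hx) (Finset.mem_coe.mpr hy) h)]
    rw [Finset.sum_congr rfl (fun k _ => (hiter k).2.1)]
    rw [Finset.sum_const, Finset.card_range, smul_eq_mul]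
  have hrγa : r * γ ≤ a := by
    have := Finset.sum_le_sum_of_subset (f := f) hOrbS
    omega
  -- divisibility facts
  have hzero : ((r * (γ + a) : ℕ) : Fin n) = 0 := by
    have h1 := (hiter r).2.2
    rw [hrper] at h1
    have : u₀ + ((r * (γ + a) : ℕ) : Fin n) = u₀ + 0 := by rw [add_zero, ← h1]
    exact add_left_cancel this
  have hdvdn : n ∣ r * (γ + a) := Fin.natCast_eq_zero.mp hzero
  have hdvda : a ∣ r * γ := by
    have h1 : a ∣ r * (γ + a) := dvd_trans ⟨2, by omega⟩ hdvdn
    have h2 : a ∣ r * a := ⟨r, mul_comm r a⟩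
    have h3 : r * (γ + a) = r * γ + r * a := by ring
    rw [h3] at h1
    exact (Nat.dvd_add_right h2).mp (by rwa [add_comm] at h1)
  have hrγeq : r * γ = a := by
    have := Nat.le_of_dvd (by positivity) hdvda
    omega
  -- parity
  have hrodd : r % 2 = 1 := by
    obtain ⟨k, hk⟩ := hdvdn
    have h1 : r * (γ + a) = r * γ + r * a := by ring
    have h2 : a * (1 + r) = (2 * a) * k := by
      have hk2 := hk
      rw [hn] at hk2
      calc a * (1 + r) = r * γ + r * a := by rw [hrγeq]; ring
        _ = r * (γ + a) := by ring
        _ = (2 * a) * k := hk2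
    have h3 : 1 + r = 2 * k := by
      have h4 : a * (1 + r) = a * (2 * k) := h2.trans (by ring)
      exact Nat.eq_of_mul_eq_mul_left (by omega) h4
    omega
  -- r is an odd divisor of 2^p
  have hrdvd : r ∣ 2 ^ p := by
    rw [← hadef]
    exact ⟨γ, hrγeq.symm⟩
  obtain ⟨i', hi'le, hi'⟩ := (Nat.dvd_prime_pow Nat.prime_two).mp hrdvd
  have : i' = 0 := by
    by_contra hi0
    obtain ⟨i'', rfl⟩ : ∃ i'', i' = i'' + 1 := ⟨i' - 1, by omega⟩
    rw [pow_succ] at hi'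
    omega
  rw [this, pow_zero] at hi'
  rw [hi', one_mul] at hrγeq
  omega

end MainUB

section LB
open Finset
open Fin.NatCast

/-- the values of the independent set -/
private def gfun (a i : ℕ) : ℕ := if i < a / 2 then 2 * i else 2 * i + 1

variable {n a : ℕ} [NeZero n]

lemma gfun_lt (hn : n = 2 * a) (ha : 2 ≤ a) (hev : a % 2 = 0) {i : ℕ} (hi : i < a - 1) :
    gfun a i < n := by
  unfold gfun
  split <;> omega

lemma gfun_mono (hev : a % 2 = 0) {i j : ℕ} (hij : i < j) : gfun a i < gfun a j := by
  unfold gfun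
  split <;> split <;> omega

lemma no_step (hn : n = 2 * a) (ha : 2 ≤ a) (hev : a % 2 = 0) {i j : ℕ}
    (hi : i < a - 1) (hj : j < a - 1) :
    (gfun a i + 1) % n ≠ gfun a j ∧ (gfun a i + a) % n ≠ gfun a j := by
  unfold gfun
  have h2 : ∀ x : ℕ, x < n → ∀ y : ℕ, (x + a) % n = y → (x + a < n ∧ x + a = y) ∨
      (n ≤ x + a ∧ x + a - n = y) := by
    intro x hx y hxy
    rcases Nat.lt_or_ge (x + a) n with h | h
    · left; exact ⟨h, by rwa [Nat.mod_eq_of_lt h] at hxy⟩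
    · right
      refine ⟨h, ?_⟩
      rwa [Nat.mod_eq_sub_mod h, Nat.mod_eq_of_lt (by omega)] at hxy
  split <;> split <;> rename_i h1' h2' <;>
    refine ⟨?_, ?_⟩ <;> intro hcon
  all_goals try (rw [Nat.mod_eq_of_lt (by omega)] at hcon; omega)
  all_goals
    rcases h2 _ (by omega) _ hcon with ⟨hb, he⟩ | ⟨hb, he⟩ <;> omega

lemma indep_set_exists (hn : n = 2 * a) (ha : 2 ≤ a) (hev : a % 2 = 0) :
    ∃ s : Finset (Fin n), (∀ u ∈ s, ∀ v ∈ s, ¬ (circulantGraph n a).Adj u v) ∧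
      s.card = a - 1 := by
  classical
  refine ⟨(Finset.range (a - 1)).image (fun i => ((gfun a i : ℕ) : Fin n)), ?_, ?_⟩
  · intro u hu v hv hadj
    rw [Finset.mem_image] at hu hv
    obtain ⟨i, hi, rfl⟩ := hu
    obtain ⟨j, hj, rfl⟩ := hv
    rw [Finset.mem_range] at hi hj
    rw [circ_adj] at hadj
    obtain ⟨hne, hcases⟩ := hadj
    have hvi : ((gfun a i : ℕ) : Fin n).val = gfun a i :=
      Fin.val_cast_of_lt (gfun_lt hn ha hev hi)
    have hvj : ((gfun a j : ℕ) : Fin n).val = gfun a j :=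
      Fin.val_cast_of_lt (gfun_lt hn ha hev hj)
    rw [hvi, hvj] at hcases
    have hij := no_step hn ha hev hi hj
    have hji := no_step hn ha hev hj hi
    tauto
  · rw [Finset.card_image_of_injOn, Finset.card_range]
    intro i hi j hj hijeq
    simp only [Finset.coe_range, Set.mem_Iio] at hi hj
    by_contra hne
    have hvi : ((gfun a i : ℕ) : Fin n).val = gfun a i :=
      Fin.val_cast_of_lt (gfun_lt hn ha hev hi)
    have hvj : ((gfun a j : ℕ) : Fin n).val = gfun a j :=
      Fin.val_cast_of_lt (gfun_lt hn ha hev hj)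
    have h3 : ((gfun a i : ℕ) : Fin n) = ((gfun a j : ℕ) : Fin n) := hijeq
    have : gfun a i = gfun a j := by
      have h4 := congrArg Fin.val h3
      rwa [hvi, hvj] at h4
    rcases Nat.lt_or_ge i j with h | h
    · have := gfun_mono (a := a) hev h; omega
    · have h2 : j < i := by omega
      have := gfun_mono (a := a) hev h2; omega

lemma indicator_broadcast (hn : n = 2 * a) (ha : 2 ≤ a) (s : Finset (Fin n))
    (hind : ∀ u ∈ s, ∀ v ∈ s, ¬ (circulantGraph n a).Adj u v) :
    IsIndepBroadcast (circulantGraph n a) (fun v => if v ∈ s then 1 else 0) ∧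
      ∑ v, (if v ∈ s then 1 else 0) = s.card := by
  classical
  have hn2 : 2 ≤ n := by omega
  refine ⟨⟨?_, ?_⟩, ?_⟩
  · intro v
    by_cases hvs : v ∈ s
    · simpa [hvs] using one_le_ecc (a := a) hn2 v
    · simp [hvs]
  · intro u v huv hu hv
    have hus : u ∈ s := by by_contra h; simp [h] at hu
    have hvs : v ∈ s := by by_contra h; simp [h] at hv
    have hne0 : (circulantGraph n a).dist u v ≠ 0 := by
      rw [SimpleGraph.dist_ne_zero_iff_ne_and_reachable]
      exact ⟨huv, (circ_connected hn2).preconnected u v⟩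
    have hne1 : (circulantGraph n a).dist u v ≠ 1 := fun h =>
      (hind u hus v hvs) (SimpleGraph.dist_eq_one_iff_adj.mp h)
    simp only [if_pos hus, if_pos hvs]
    omega
  · rw [Finset.sum_ite_mem, Finset.univ_inter, Finset.sum_const, smul_eq_mul, mul_one]

end LB

theorem stmt4 (p : ℕ) (hp : 1 ≤ p) :
    betaB (circulantGraph (2 * 2 ^ p) (2 ^ p)) = 2 ^ p - 1 ∧
    alphaNum (circulantGraph (2 * 2 ^ p) (2 ^ p)) = 2 ^ p - 1 := by
  classical
  haveI : NeZero (2 * 2 ^ p) := ⟨by positivity⟩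
  have hn : 2 * 2 ^ p = 2 * 2 ^ p := rfl
  have ha : 2 ≤ 2 ^ p := by
    have h2 : 2 ^ 1 ≤ 2 ^ p := Nat.pow_le_pow_right (by norm_num) hp
    simpa using h2
  have hev : 2 ^ p % 2 = 0 := by
    obtain ⟨q, rfl⟩ : ∃ q, p = q + 1 := ⟨p - 1, by omega⟩
    rw [pow_succ]
    omega
  obtain ⟨s, hs_ind, hs_card⟩ := indep_set_exists hn ha hev
  obtain ⟨hbr, hbrsum⟩ := indicator_broadcast hn ha s hs_ind
  constructor
  · -- betaB
    apply le_antisymm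
    · apply csSup_le
      · exact ⟨2 ^ p - 1, ⟨_, hbr, by rw [hbrsum, hs_card]⟩⟩
      · rintro k ⟨f, hf, rfl⟩
        exact main_ub p hp hn rfl f hf
    · apply le_csSup
      · exact ⟨2 ^ p - 1, by rintro k ⟨f, hf, rfl⟩; exact main_ub p hp hn rfl f hf⟩
      · exact ⟨_, hbr, by rw [hbrsum, hs_card]⟩
  · -- alphaNum
    apply le_antisymm
    · apply csSup_le
      · exact ⟨2 ^ p - 1, ⟨s, hs_ind, hs_card⟩⟩
      · rintro k ⟨t, ht_ind, rfl⟩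
        obtain ⟨hbr', hbrsum'⟩ := indicator_broadcast hn ha t ht_ind
        have := main_ub p hp hn rfl _ hbr'
        rw [hbrsum'] at this
        exact this
    · apply le_csSup
      · refine ⟨2 ^ p - 1, ?_⟩
        rintro k ⟨t, ht_ind, rfl⟩
        obtain ⟨hbr', hbrsum'⟩ := indicator_broadcast hn ha t ht_ind
        have := main_ub p hp hn rfl _ hbr'
        rw [hbrsum'] at this
        exact this
      · exact ⟨s, hs_ind, hs_card⟩
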